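/- Let 0 < p < 2. There exists a constant c_p > 0 depending only on p with the following property: whenever f, g : (0,∞) → [0,∞) are antitone (nonincreasing) functions with ∫_0^∞ f(s)² ds = ∫_0^∞ g(s)² ds < ∞ and ∫_0^t f(s)² ds ≤ ∫_0^t g(s)² ds for every t > 0, and sup_{t>0} t^{1/p}·f(t) < ∞, then sup_{t>0} t^{1/p}·g(t) ≤ c_p · sup_{t>0} t^{1/p}·f(t). -/

import Mathlib

open MeasureTheory ENNReal

/-- Let `0 < p < 2`. There is a constant `c_p > 0` such that whenever
`f, g : (0,∞) → [0,∞)` are nonincreasing with `∫₀^∞ f² = ∫₀^∞ g² < ∞` and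
`∫₀^t f² ≤ ∫₀^t g²` for all `t > 0`, and `sup_{t>0} t^{1/p} f(t) < ∞`, then
`sup_{t>0} t^{1/p} g(t) ≤ c_p · sup_{t>0} t^{1/p} f(t)`. -/
theorem stmt5 (p : ℝ) (hp0 : 0 < p) (hp2 : p < 2) :
    ∃ c : ℝ, 0 < c ∧
      ∀ f g : ℝ → ℝ,
        AntitoneOn f (Set.Ioi 0) → AntitoneOn g (Set.Ioi 0) →
        (∀ s ∈ Set.Ioi (0 : ℝ), 0 ≤ f s) → (∀ s ∈ Set.Ioi (0 : ℝ), 0 ≤ g s) →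
        (∫⁻ s in Set.Ioi (0 : ℝ), ENNReal.ofReal (f s ^ 2)) =
          (∫⁻ s in Set.Ioi (0 : ℝ), ENNReal.ofReal (g s ^ 2)) →
        (∫⁻ s in Set.Ioi (0 : ℝ), ENNReal.ofReal (f s ^ 2)) < ∞ →
        (∀ t > (0 : ℝ), (∫⁻ s in Set.Ioc (0 : ℝ) t, ENNReal.ofReal (f s ^ 2)) ≤
                        (∫⁻ s in Set.Ioc (0 : ℝ) t, ENNReal.ofReal (g s ^ 2))) →
        (⨆ t ∈ Set.Ioi (0 : ℝ), ENNReal.ofReal (t ^ (1 / p) * f t)) < ∞ →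
        (⨆ t ∈ Set.Ioi (0 : ℝ), ENNReal.ofReal (t ^ (1 / p) * g t)) ≤
          ENNReal.ofReal c * ⨆ t ∈ Set.Ioi (0 : ℝ), ENNReal.ofReal (t ^ (1 / p) * f t) := by
  have hq : (0:ℝ) < p / (2 - p) := div_pos hp0 (by linarith)
  have h2p : 1 < 2 / p := by rw [lt_div_iff₀ hp0]; linarith
  refine ⟨(2:ℝ) ^ (1/p) * Real.sqrt (p / (2 - p)),
    mul_pos (Real.rpow_pos_of_pos two_pos _) (Real.sqrt_pos.2 hq), ?_⟩
  intro f g hf hg hf0 hg0 heq hfin hpart hsupf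
  set A : ℝ≥0∞ := ⨆ t ∈ Set.Ioi (0 : ℝ), ENNReal.ofReal (t ^ (1 / p) * f t) with hA
  set A' : ℝ := A.toReal with hA'
  have hA'0 : 0 ≤ A' := ENNReal.toReal_nonneg
  -- pointwise bound on f
  have hfb : ∀ s ∈ Set.Ioi (0:ℝ), f s ≤ A' * s ^ (-(1/p)) := by
    intro s hs
    have hs0 : (0:ℝ) < s := hs
    have h1 : ENNReal.ofReal (s ^ (1/p) * f s) ≤ A :=
      le_iSup₂ (f := fun t (_ : t ∈ Set.Ioi (0:ℝ)) => ENNReal.ofReal (t ^ (1/p) * f t)) s hs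
    have h2 : s ^ (1/p) * f s ≤ A' :=
      (ENNReal.ofReal_le_iff_le_toReal hsupf.ne).1 h1
    have hsp : (0:ℝ) < s ^ (1/p) := Real.rpow_pos_of_pos hs0 _
    rw [Real.rpow_neg hs0.le, ← div_eq_mul_inv, le_div_iff₀ hsp]
    linarith [h2, mul_comm (f s) (s ^ (1/p))]
  -- total integral of g² is finite
  have hgfin : (∫⁻ s in Set.Ioi (0:ℝ), ENNReal.ofReal (g s ^ 2)) < ∞ := heq ▸ hfin
  -- tail estimate for f
  set K : ℝ := A' ^ 2 * (p / (2 - p)) with hK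
  have hK0 : 0 ≤ K := mul_nonneg (sq_nonneg _) hq.le
  have hftail : ∀ t > (0:ℝ),
      (∫⁻ s in Set.Ioi t, ENNReal.ofReal (f s ^ 2)) ≤ ENNReal.ofReal (K * t ^ (1 - 2/p)) := by
    intro t ht
    have hlt : -(2/p) < -1 := by linarith
    have hint : IntegrableOn (fun s : ℝ => s ^ (-(2/p))) (Set.Ioi t) :=
      integrableOn_Ioi_rpow_of_lt hlt ht
    have hval : ∫ s in Set.Ioi t, A' ^ 2 * s ^ (-(2/p)) = K * t ^ (1 - 2/p) := by
      rw [integral_const_mul, integral_Ioi_rpow_of_lt hlt ht]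
      have he : -(2/p) + 1 = 1 - 2/p := by ring
      rw [he, hK]
      have hne : 1 - 2/p ≠ 0 := by intro h; rw [sub_eq_zero] at h; exact h2p.ne h
      have h2pne : (2:ℝ) - p ≠ 0 := by linarith
      have key : (p/(2-p)) * (1 - 2/p) = -1 := by
        field_simp
        ring
      rw [show p/(2-p) = -1/(1-2/p) from by rw [eq_div_iff hne]; exact key]
      ring
    have hmono : (∫⁻ s in Set.Ioi t, ENNReal.ofReal (f s ^ 2)) ≤
        ∫⁻ s in Set.Ioi t, ENNReal.ofReal (A' ^ 2 * s ^ (-(2/p))) := by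
      refine setLIntegral_mono' measurableSet_Ioi fun s hs => ?_
      have hs0 : (0:ℝ) < s := ht.trans hs
      apply ENNReal.ofReal_le_ofReal
      have h1 : f s ^ 2 ≤ (A' * s ^ (-(1/p))) ^ 2 :=
        pow_le_pow_left₀ (hf0 s hs0) (hfb s hs0) 2
      refine h1.trans_eq ?_
      rw [mul_pow, ← Real.rpow_natCast (s ^ (-(1/p))) 2, ← Real.rpow_mul hs0.le,
        show (-(1/p)) * ((2:ℕ):ℝ) = -(2/p) by push_cast; ring]
    refine hmono.trans ?_
    rw [← ofReal_integral_eq_lintegral_ofReal (hint.const_mul _)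
      (((ae_restrict_iff' measurableSet_Ioi).2 (ae_of_all _ fun s hs =>
        mul_nonneg (sq_nonneg _) (Real.rpow_nonneg (ht.trans hs).le _))))]
    rw [hval]
  -- tail comparison: tail of g ≤ tail of f
  have htail : ∀ t > (0:ℝ),
      (∫⁻ s in Set.Ioi t, ENNReal.ofReal (g s ^ 2)) ≤
        ∫⁻ s in Set.Ioi t, ENNReal.ofReal (f s ^ 2) := by
    intro t ht
    have hsplit : ∀ h : ℝ → ℝ,
        (∫⁻ s in Set.Ioi (0:ℝ), ENNReal.ofReal (h s ^ 2)) =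
          (∫⁻ s in Set.Ioc (0:ℝ) t, ENNReal.ofReal (h s ^ 2)) +
          (∫⁻ s in Set.Ioi t, ENNReal.ofReal (h s ^ 2)) := by
      intro h
      rw [← lintegral_union measurableSet_Ioi Set.Ioc_disjoint_Ioi_same,
        Set.Ioc_union_Ioi_eq_Ioi ht.le]
    have hPg_fin : (∫⁻ s in Set.Ioc (0:ℝ) t, ENNReal.ofReal (g s ^ 2)) ≠ ∞ :=
      ((lintegral_mono_set (Set.Ioc_subset_Ioi_self)).trans_lt hgfin).ne
    have h1 : (∫⁻ s in Set.Ioc (0:ℝ) t, ENNReal.ofReal (g s ^ 2)) +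
        (∫⁻ s in Set.Ioi t, ENNReal.ofReal (g s ^ 2)) ≤
        (∫⁻ s in Set.Ioc (0:ℝ) t, ENNReal.ofReal (g s ^ 2)) +
        (∫⁻ s in Set.Ioi t, ENNReal.ofReal (f s ^ 2)) := by
      rw [← hsplit g, ← heq, hsplit f]
      exact add_le_add_left (hpart t ht) _
    exact (ENNReal.add_le_add_iff_left hPg_fin).1 h1
  -- main pointwise bound for g
  refine iSup₂_le fun u hu => ?_
  have hu0 : (0:ℝ) < u := hu
  set t : ℝ := u / 2 with htdef
  have ht : (0:ℝ) < t := by positivity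
  have h2t : 2 * t = u := by rw [htdef]; ring
  -- lower bound the tail of g by the constant g u on Ioc t (2t)
  have hconst : ENNReal.ofReal (g u ^ 2) * ENNReal.ofReal t ≤
      ∫⁻ s in Set.Ioc t (2*t), ENNReal.ofReal (g s ^ 2) := by
    have := setLIntegral_const (μ := volume) (Set.Ioc t (2*t)) (ENNReal.ofReal (g u ^ 2))
    rw [Real.volume_Ioc, show 2*t - t = t by ring] at this
    rw [← this]
    refine setLIntegral_mono' measurableSet_Ioc fun s hs => ?_
    have hs0 : (0:ℝ) < s := ht.trans hs.1
    have hgu : g u ≤ g s := by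
      rw [← h2t]
      exact hg hs0 (by rw [Set.mem_Ioi]; linarith) hs.2
    exact ENNReal.ofReal_le_ofReal
      (pow_le_pow_left₀ (hg0 u hu) (by rw [← h2t] at hgu ⊢; exact hgu) 2)
  have hchain : ENNReal.ofReal (g u ^ 2 * t) ≤ ENNReal.ofReal (K * t ^ (1 - 2/p)) := by
    rw [ENNReal.ofReal_mul (sq_nonneg _)]
    refine hconst.trans ?_
    refine (lintegral_mono_set ?_).trans ((htail t ht).trans (hftail t ht))
    intro s hs; exact hs.1
  have hreal : g u ^ 2 * t ≤ K * t ^ (1 - 2/p) :=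
    (ENNReal.ofReal_le_ofReal_iff
      (mul_nonneg hK0 (Real.rpow_nonneg ht.le _))).1 hchain
  -- deduce g u ^ 2 ≤ K * t ^ (-(2/p))
  have hsq : g u ^ 2 ≤ K * t ^ (-(2/p)) := by
    have hts : t ^ (1 - 2/p) = t ^ (-(2/p)) * t := by
      rw [show (1 - 2/p) = -(2/p) + 1 by ring, Real.rpow_add ht, Real.rpow_one]
    rw [hts, ← mul_assoc] at hreal
    exact le_of_mul_le_mul_right hreal ht
  -- take square roots
  have hgub : g u ≤ Real.sqrt K * t ^ (-(1/p)) := by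
    have h1 : g u = Real.sqrt (g u ^ 2) := (Real.sqrt_sq (hg0 u hu)).symm
    rw [h1]
    refine (Real.sqrt_le_sqrt hsq).trans_eq ?_
    have h2 : Real.sqrt (t ^ (-(2/p))) = t ^ (-(1/p)) := by
      rw [Real.sqrt_eq_rpow, ← Real.rpow_mul ht.le,
        show -(2/p) * (1/2) = -(1/p) by ring]
    rw [Real.sqrt_mul hK0, h2]
  have hsqK : Real.sqrt K = A' * Real.sqrt (p / (2 - p)) := by
    rw [hK, Real.sqrt_mul (sq_nonneg _), Real.sqrt_sq hA'0]
  -- final bound on u^(1/p) * g u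
  have hfinal : u ^ (1/p) * g u ≤ (2:ℝ) ^ (1/p) * Real.sqrt (p / (2 - p)) * A' := by
    have hup : u ^ (1/p) = (2:ℝ) ^ (1/p) * t ^ (1/p) := by
      rw [← h2t, Real.mul_rpow (by norm_num) ht.le]
    have h1 : u ^ (1/p) * g u ≤ u ^ (1/p) * (Real.sqrt K * t ^ (-(1/p))) :=
      mul_le_mul_of_nonneg_left hgub (Real.rpow_nonneg hu0.le _)
    refine h1.trans_eq ?_
    have htp : t ^ (1/p) ≠ 0 := (Real.rpow_pos_of_pos ht _).ne'
    rw [hup, hsqK, Real.rpow_neg ht.le]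
    calc (2:ℝ)^(1/p) * t^(1/p) * (A' * Real.sqrt (p/(2-p)) * (t^(1/p))⁻¹)
        = (2:ℝ)^(1/p) * Real.sqrt (p/(2-p)) * A' * (t^(1/p) * (t^(1/p))⁻¹) := by ring
      _ = (2:ℝ)^(1/p) * Real.sqrt (p/(2-p)) * A' := by rw [mul_inv_cancel₀ htp, mul_one]
  calc ENNReal.ofReal (u ^ (1/p) * g u)
      ≤ ENNReal.ofReal (((2:ℝ) ^ (1/p) * Real.sqrt (p / (2 - p))) * A') :=
        ENNReal.ofReal_le_ofReal hfinal
    _ = ENNReal.ofReal ((2:ℝ) ^ (1/p) * Real.sqrt (p / (2 - p))) * ENNReal.ofReal A' :=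
        ENNReal.ofReal_mul (by positivity)
    _ = ENNReal.ofReal ((2:ℝ) ^ (1/p) * Real.sqrt (p / (2 - p))) * A := by
        rw [hA', ENNReal.ofReal_toReal hsupf.ne]
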